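/- arXiv:0906.4997 — 3 statements merged into one kernel-verified Lean document; each statement's English description precedes it below -/
import Mathlib

section
/- Let G be a group with a left-invariant total ordering, K a subgroup of G, and suppose the set of left cosets G/K carries a total order ≺' satisfying gK ≺' hK implies fgK ≺' fhK for all f, g, h ∈ G, together with a left-invariant ordering ≺ of K. Define g > 1 iff (g ∈ K and g ≻ 1) or (g ∉ K and gK ≻' K). Then this defines a positive cone of a left-invariant total ordering of G, and K is convex with respect to this ordering. -/
theorem stmt_2 {G : Type*} [Group G] (K : Subgroup G)
    (ltK : K → K → Prop) (hK : IsStrictTotalOrder K ltK)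
    (hKinv : ∀ f g h : K, ltK g h → ltK (f * g) (f * h))
    (ltQ : G ⧸ K → G ⧸ K → Prop) (hQ : IsStrictTotalOrder (G ⧸ K) ltQ)
    (hQinv : ∀ f g h : G, ltQ (g : G ⧸ K) (h : G ⧸ K) →
      ltQ ((f * g : G) : G ⧸ K) ((f * h : G) : G ⧸ K)) :
    let P : Set G := {g | (∃ hg : g ∈ K, ltK 1 ⟨g, hg⟩) ∨
      (g ∉ K ∧ ltQ ((1 : G) : G ⧸ K) (g : G ⧸ K))}
    (∀ a ∈ P, ∀ b ∈ P, a * b ∈ P) ∧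
    (∀ g : G, (g ∈ P ∧ g⁻¹ ∉ P ∧ g ≠ 1) ∨ (g⁻¹ ∈ P ∧ g ∉ P ∧ g ≠ 1) ∨
      (g = 1 ∧ g ∉ P ∧ g⁻¹ ∉ P)) ∧
    (∀ f ∈ K, ∀ h ∈ K, ∀ g : G, f⁻¹ * g ∈ P → g⁻¹ * h ∈ P → g ∈ K) := by
  haveI := hK
  haveI := hQ
  intro P
  have hmk : ∀ g : G, g ∈ K → ((g : G ⧸ K) = ((1:G) : G ⧸ K)) := by
    intro g hg
    rw [QuotientGroup.eq]
    simpa using hg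
  have hmk' : ∀ g : G, ((g : G ⧸ K) = ((1:G) : G ⧸ K)) → g ∈ K := by
    intro g hg
    rw [QuotientGroup.eq] at hg
    simpa using hg
  refine ⟨?_, ?_, ?_⟩
  · rintro a (⟨ha, hlta⟩ | ⟨ha, hlta⟩) b (⟨hb, hltb⟩ | ⟨hb, hltb⟩)
    · left
      refine ⟨mul_mem ha hb, ?_⟩
      have h1 := hKinv ⟨a, ha⟩ 1 ⟨b, hb⟩ hltb
      rw [mul_one] at h1
      exact trans_of ltK hlta h1
    · right
      have hab : a * b ∉ K := fun h => hb (by simpa using mul_mem (inv_mem ha) h)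
      refine ⟨hab, ?_⟩
      have h1 := hQinv a 1 b hltb
      rw [mul_one] at h1
      rwa [hmk a ha] at h1
    · right
      have hab : a * b ∉ K := fun h => ha (by simpa using mul_mem h (inv_mem hb))
      refine ⟨hab, ?_⟩
      have heq : ((a * b : G) : G ⧸ K) = (a : G ⧸ K) := by
        rw [QuotientGroup.eq]
        simpa using inv_mem hb
      rw [heq]
      exact hlta
    · have h1 := hQinv a 1 b hltb
      rw [mul_one] at h1
      have h2 := trans_of ltQ hlta h1
      have hab : a * b ∉ K := fun h => by
        rw [hmk _ h] at h2
        exact irrefl_of ltQ _ h2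
      exact Or.inr ⟨hab, h2⟩
  · intro g
    by_cases hg1 : g = 1
    · right; right
      subst hg1
      refine ⟨rfl, ?_, ?_⟩ <;>
      · rintro (⟨h, hlt⟩ | ⟨h, hlt⟩)
        · exact irrefl_of ltK 1 (by have e : (⟨1, one_mem K⟩ : K) = 1 := rfl; simpa [e] using hlt)
        · exact h (by simp [one_mem])
    · by_cases hg : g ∈ K
      · have hginv : g⁻¹ ∈ K := inv_mem hg
        have hone : (⟨g⁻¹, hginv⟩ : K) * ⟨g, hg⟩ = 1 := by
          ext; simp
        have hne : (1 : K) ≠ ⟨g, hg⟩ := fun h =>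
          hg1 (by simpa using (congrArg Subtype.val h).symm)
        rcases trichotomous_of ltK 1 ⟨g, hg⟩ with h | h | h
        · left
          refine ⟨Or.inl ⟨hg, h⟩, ?_, hg1⟩
          rintro (⟨h', hlt⟩ | ⟨h', hlt⟩)
          · have h2 := hKinv ⟨g⁻¹, hginv⟩ 1 ⟨g, hg⟩ h
            rw [mul_one, hone] at h2
            exact irrefl_of ltK _ (trans_of ltK (hlt : ltK 1 ⟨g⁻¹, hginv⟩) h2)
          · exact h' hginv
        · exact absurd h hne
        · right; left
          have hlt' : ltK 1 ⟨g⁻¹, hginv⟩ := by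
            have h2 := hKinv ⟨g⁻¹, hginv⟩ ⟨g, hg⟩ 1 h
            rw [mul_one, hone] at h2
            exact h2
          refine ⟨Or.inl ⟨hginv, hlt'⟩, ?_, hg1⟩
          rintro (⟨h', hlt⟩ | ⟨h', hlt⟩)
          · exact irrefl_of ltK _ (trans_of ltK (hlt : ltK 1 ⟨g, hg⟩) h)
          · exact h' hg
      · have hginv : g⁻¹ ∉ K := fun h => hg (by simpa using inv_mem h)
        have hinvlt : ∀ h' : ltQ ((1:G) : G ⧸ K) (g : G ⧸ K),
            ltQ ((g⁻¹ : G) : G ⧸ K) ((1:G) : G ⧸ K) := by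
          intro h'
          have h2 := hQinv g⁻¹ 1 g h'
          rw [mul_one, inv_mul_cancel] at h2
          exact h2
        have hinvlt' : ∀ h' : ltQ ((g : G) : G ⧸ K) ((1:G) : G ⧸ K),
            ltQ ((1:G) : G ⧸ K) ((g⁻¹ : G) : G ⧸ K) := by
          intro h'
          have h2 := hQinv g⁻¹ g 1 h'
          rw [mul_one, inv_mul_cancel] at h2
          exact h2
        rcases trichotomous_of ltQ ((1:G) : G ⧸ K) (g : G ⧸ K) with h | h | h
        · left
          refine ⟨Or.inr ⟨hg, h⟩, ?_, hg1⟩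
          rintro (⟨h', hlt⟩ | ⟨h', hlt⟩)
          · exact hginv h'
          · exact irrefl_of ltQ _ (trans_of ltQ hlt (hinvlt h))
        · exact absurd (hmk' g h.symm) hg
        · right; left
          refine ⟨Or.inr ⟨hginv, hinvlt' h⟩, ?_, hg1⟩
          rintro (⟨h', hlt⟩ | ⟨h', hlt⟩)
          · exact hg h'
          · exact irrefl_of ltQ _ (trans_of ltQ hlt h)
  · intro f hf h hh g h1 h2
    by_contra hg
    have hm1 : f⁻¹ * g ∉ K := fun hm => hg (by simpa using mul_mem hf hm)
    have hm2 : g⁻¹ * h ∉ K := fun hm => by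
      have : g⁻¹ ∈ K := by simpa using mul_mem hm (inv_mem hh)
      exact hg (by simpa using inv_mem this)
    rcases h1 with ⟨hm, _⟩ | ⟨_, hlt1⟩
    · exact hm1 hm
    rcases h2 with ⟨hm, _⟩ | ⟨_, hlt2⟩
    · exact hm2 hm
    have q1 := hQinv f 1 (f⁻¹ * g) hlt1
    rw [mul_one, mul_inv_cancel_left, hmk f hf] at q1
    have q2 := hQinv g 1 (g⁻¹ * h) hlt2
    rw [mul_one, mul_inv_cancel_left, hmk h hh] at q2
    exact irrefl_of ltQ _ (trans_of ltQ q1 q2)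
end

section
/- Let < be a left-invariant total order on a group G such that for all g, h > 1 one has g < hg². Then for all g, h > 1 and every positive integer n ≥ 2, g < hgⁿ. -/
theorem stmt_3 {G : Type*} [Group G] [LinearOrder G]
    (hleft : ∀ f g h : G, g < h → f * g < f * h)
    (hC : ∀ g h : G, 1 < g → 1 < h → g < h * g ^ 2) :
    ∀ g h : G, 1 < g → 1 < h → ∀ n : ℕ, 2 ≤ n → g < h * g ^ n := by
  intro g h hg hh n hn
  induction n, hn using Nat.le_induction generalizing h with
  | base => exact hC g h hg hh
  | succ n hn ih =>
    have hhg : 1 < h * g := lt_trans hh (by simpa using hleft h 1 g hg)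
    calc g < (h * g) * g ^ n := ih (h * g) hhg
    _ = h * g ^ (n + 1) := by rw [mul_assoc, ← pow_succ']
end

section
/- Let F₂ be the free group on x, y, and φ the automorphism with φ(x) = xy⁻¹x, φ(y) = xy⁻¹x². If K is a normal subgroup of F₂ containing the commutator subgroup [F₂, F₂] (equivalently, F₂/K is abelian), then φ⁶(K) = K. -/
namespace Stmt7Aux

abbrev F := FreeGroup (Fin 2)

def X : F := FreeGroup.of 0
def Y : F := FreeGroup.of 1

def Φ : F →* F := FreeGroup.lift ![X * Y⁻¹ * X, X * Y⁻¹ * X ^ 2]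
def Ψ : F →* F := FreeGroup.lift ![X⁻¹ * Y, X⁻¹ * Y * X⁻¹ * X⁻¹ * Y]

lemma phi_psi (w : F) : Φ (Ψ w) = w := by
  have h : Φ.comp Ψ = MonoidHom.id F := by
    apply FreeGroup.ext_hom
    intro i
    fin_cases i <;>
      simp [Φ, Ψ, X, Y, pow_two] <;> group
  calc Φ (Ψ w) = (Φ.comp Ψ) w := rfl
    _ = w := by rw [h]; rfl

/-- exponent-sum homomorphism -/
def χ : F →* Multiplicative (ℤ × ℤ) :=
  FreeGroup.lift ![Multiplicative.ofAdd ((1 : ℤ), (0 : ℤ)), Multiplicative.ofAdd ((0 : ℤ), (1 : ℤ))]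

def A₀ : ℤ × ℤ →+ ℤ × ℤ where
  toFun p := (2 * p.1 + 3 * p.2, -p.1 - p.2)
  map_zero' := by simp
  map_add' p q := by ext <;> simp <;> ring

def B₀ : ℤ × ℤ →+ ℤ × ℤ where
  toFun p := (-p.1 - 3 * p.2, p.1 + 2 * p.2)
  map_zero' := by simp
  map_add' p q := by ext <;> simp <;> ring

def A : Multiplicative (ℤ × ℤ) →* Multiplicative (ℤ × ℤ) := AddMonoidHom.toMultiplicative A₀
def B : Multiplicative (ℤ × ℤ) →* Multiplicative (ℤ × ℤ) := AddMonoidHom.toMultiplicative B₀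

lemma chi_phi (w : F) : χ (Φ w) = A (χ w) := by
  have h : χ.comp Φ = A.comp χ := by
    apply FreeGroup.ext_hom
    intro i
    fin_cases i <;>
      simp [Φ, χ, A, A₀, X, Y, pow_two, ← ofAdd_add, ← ofAdd_neg]
  calc χ (Φ w) = (χ.comp Φ) w := rfl
    _ = A (χ w) := by rw [h]; rfl

lemma chi_psi (w : F) : χ (Ψ w) = B (χ w) := by
  have h : χ.comp Ψ = B.comp χ := by
    apply FreeGroup.ext_hom
    intro i
    fin_cases i <;>
      simp [Ψ, χ, B, B₀, X, Y, ← ofAdd_add, ← ofAdd_neg]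
  calc χ (Ψ w) = (χ.comp Ψ) w := rfl
    _ = B (χ w) := by rw [h]; rfl

lemma A₀6 (p : ℤ × ℤ) : A₀ (A₀ (A₀ (A₀ (A₀ (A₀ p))))) = p := by
  obtain ⟨a, b⟩ := p
  simp only [A₀, AddMonoidHom.coe_mk, ZeroHom.coe_mk]
  ext <;> dsimp <;> ring

lemma B₀6 (p : ℤ × ℤ) : B₀ (B₀ (B₀ (B₀ (B₀ (B₀ p))))) = p := by
  obtain ⟨a, b⟩ := p
  simp only [B₀, AddMonoidHom.coe_mk, ZeroHom.coe_mk]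
  ext <;> dsimp <;> ring

lemma A6 (p : Multiplicative (ℤ × ℤ)) : A (A (A (A (A (A p))))) = p := by
  simp only [A, AddMonoidHom.toMultiplicative_apply_apply, toAdd_ofAdd]
  rw [A₀6]
  rfl

lemma B6 (p : Multiplicative (ℤ × ℤ)) : B (B (B (B (B (B p))))) = p := by
  simp only [B, AddMonoidHom.toMultiplicative_apply_apply, toAdd_ofAdd]
  rw [B₀6]
  rfl

end Stmt7Aux

namespace Stmt7Aux

noncomputable def η₀ : (Fin 2 →₀ ℤ) →+ ℤ × ℤ :=
  (Finsupp.applyAddHom (0 : Fin 2)).prod (Finsupp.applyAddHom (1 : Fin 2))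

noncomputable def d : Abelianization F →* Multiplicative (ℤ × ℤ) :=
  AddMonoidHom.toMultiplicativeRight
    (η₀.comp (FreeAbelianGroup.equivFinsupp (Fin 2)).toAddMonoidHom)

lemma d_of : d.comp Abelianization.of = χ := by
  apply FreeGroup.ext_hom
  intro i
  show d (Abelianization.of (FreeGroup.of i)) = χ (FreeGroup.of i)
  have e1 : d (Abelianization.of (FreeGroup.of i)) =
      Multiplicative.ofAdd (η₀ (FreeAbelianGroup.toFinsupp (FreeAbelianGroup.of i))) := rfl
  rw [e1, FreeAbelianGroup.toFinsupp_of]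
  have e2 : η₀ (Finsupp.single i 1) =
      ((Finsupp.single i 1) 0, (Finsupp.single i 1) 1) := rfl
  rw [e2]
  fin_cases i <;> simp [χ, Finsupp.single_apply]

lemma d_injective : Function.Injective d := by
  intro u v huv
  have h : η₀ ((FreeAbelianGroup.equivFinsupp (Fin 2)) (Additive.ofMul u)) =
      η₀ ((FreeAbelianGroup.equivFinsupp (Fin 2)) (Additive.ofMul v)) := by
    exact congrArg Multiplicative.toAdd huv
  have h2 : (FreeAbelianGroup.equivFinsupp (Fin 2)) (Additive.ofMul u) =
      (FreeAbelianGroup.equivFinsupp (Fin 2)) (Additive.ofMul v) := by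
    ext i
    fin_cases i
    · exact congrArg Prod.fst h
    · exact congrArg Prod.snd h
  have h3 : Additive.ofMul u = Additive.ofMul v :=
    (FreeAbelianGroup.equivFinsupp (Fin 2)).injective h2
  exact h3

lemma ker_chi {w : F} (h : χ w = 1) : w ∈ commutator F := by
  have h1 : d (Abelianization.of w) = 1 := by
    have := DFunLike.congr_fun d_of w
    simp only [MonoidHom.comp_apply] at this
    rw [this, h]
  have h2 : Abelianization.of w = 1 := d_injective (by rw [h1, map_one])
  exact (QuotientGroup.eq_one_iff w).mp h2

end Stmt7Aux

open Stmt7Aux in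
theorem stmt_7 (K : Subgroup (FreeGroup (Fin 2))) [K.Normal]
    (hab : commutator (FreeGroup (Fin 2)) ≤ K) :
    let x : FreeGroup (Fin 2) := FreeGroup.of 0
    let y : FreeGroup (Fin 2) := FreeGroup.of 1
    let φ : FreeGroup (Fin 2) →* FreeGroup (Fin 2) :=
      FreeGroup.lift ![x * y⁻¹ * x, x * y⁻¹ * x ^ 2]
    Subgroup.map (φ.comp (φ.comp (φ.comp (φ.comp (φ.comp φ))))) K = K := by
  intro x y φ
  have hφ : φ = Φ := rfl
  rw [hφ]
  have key6Φ : ∀ g : FreeGroup (Fin 2), χ (Φ (Φ (Φ (Φ (Φ (Φ g)))))) = χ g := by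
    intro g
    rw [chi_phi, chi_phi, chi_phi, chi_phi, chi_phi, chi_phi, A6]
  have key6Ψ : ∀ g : FreeGroup (Fin 2), χ (Ψ (Ψ (Ψ (Ψ (Ψ (Ψ g)))))) = χ g := by
    intro g
    rw [chi_psi, chi_psi, chi_psi, chi_psi, chi_psi, chi_psi, B6]
  have memΦ : ∀ k ∈ K, Φ (Φ (Φ (Φ (Φ (Φ k))))) ∈ K := by
    intro k hk
    have h1 : Φ (Φ (Φ (Φ (Φ (Φ k))))) * k⁻¹ ∈ K :=
      hab (ker_chi (by rw [map_mul, map_inv, key6Φ, mul_inv_cancel]))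
    simpa using mul_mem h1 hk
  have memΨ : ∀ k ∈ K, Ψ (Ψ (Ψ (Ψ (Ψ (Ψ k))))) ∈ K := by
    intro k hk
    have h1 : Ψ (Ψ (Ψ (Ψ (Ψ (Ψ k))))) * k⁻¹ ∈ K :=
      hab (ker_chi (by rw [map_mul, map_inv, key6Ψ, mul_inv_cancel]))
    simpa using mul_mem h1 hk
  apply le_antisymm
  · intro w hw
    rw [Subgroup.mem_map] at hw
    obtain ⟨k, hk, rfl⟩ := hw
    simp only [MonoidHom.comp_apply]
    exact memΦ k hk
  · intro k hk
    rw [Subgroup.mem_map]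
    exact ⟨Ψ (Ψ (Ψ (Ψ (Ψ (Ψ k))))), memΨ k hk, by
      simp only [MonoidHom.comp_apply, phi_psi]⟩
end
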